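/- arXiv:1609.09051 — 2 statements merged into one kernel-verified Lean document; each statement's English description precedes it below -/
import Mathlib

section
/- Let T=(S ∪ U, E) be a transmission tree. The source case of T is a sampled case if and only if there exists a sampled case s ∈ S with v_{s,s}(T) = 0. Consequently, if T1 and T2 are transmission trees with the same sampled set S and v|_S(T1) = v|_S(T2), then the source of T1 is unsampled if and only if the source of T2 is unsampled, and if both sources are sampled then they are the same sampled case. -/
/-- A directed path from `a` to `b` in the directed graph with edge relation `E`:
a nonempty list of vertices starting at `a`, ending at `b`, with consecutive
vertices joined by directed edges. -/
def IsDirPath {V : Type*} (E : V → V → Prop) (a b : V) (l : List V) : Prop :=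
  l ≠ [] ∧ l.head? = some a ∧ l.getLast? = some b ∧ l.Chain' E

/-- The transmission-tree axioms for a directed graph with edge relation `E`:
every node has at most one infector (incoming edge), there are no directed cycles,
and the underlying undirected graph is connected. -/
def IsTransTree {V : Type*} (E : V → V → Prop) : Prop :=
  (∀ a b c : V, E a c → E b c → a = b) ∧
  (∀ v : V, ¬ Relation.TransGen E v v) ∧
  (SimpleGraph.fromRel E).Connected

/-- The depth of node `n` (relative to the source `root`): the number of edges on
the directed path from `root` to `n`. -/
noncomputable def depth {V : Type*} (E : V → V → Prop) (root n : V) : ℕ :=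
  sInf {k | ∃ l : List V, IsDirPath E root n l ∧ l.length = k + 1}

/-- `OnPath E root i m` : the node `m` lies on the directed path `p_i` from `root` to `i`. -/
def OnPath {V : Type*} (E : V → V → Prop) (root i m : V) : Prop :=
  ∃ l : List V, IsDirPath E root i l ∧ m ∈ l

/-- `IsMRCI E root i j m` : `m` is the most recent common infector of `i` and `j`,
i.e. the node of greatest depth lying both on the path from `root` to `i` and on
the path from `root` to `j`. -/
def IsMRCI {V : Type*} (E : V → V → Prop) (root i j m : V) : Prop :=
  OnPath E root i m ∧ OnPath E root j m ∧
    ∀ m' : V, OnPath E root i m' → OnPath E root j m' →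
      depth E root m' ≤ depth E root m

/-- `vEntry E root i j` : the entry `v_{i,j}(T)` of the tree vector, namely the depth of
the most recent common infector of `i` and `j` (the greatest depth of a node lying on
both the path from the source to `i` and the path from the source to `j`). -/
noncomputable def vEntry {V : Type*} (E : V → V → Prop) (root i j : V) : ℕ :=
  sSup {k | ∃ m : V, OnPath E root i m ∧ OnPath E root j m ∧ depth E root m = k}


section Aux

variable {V : Type*} {E : V → V → Prop}

lemma dirPath_singleton (E : V → V → Prop) (a : V) : IsDirPath E a a [a] :=
  ⟨by simp, by simp, by simp, List.isChain_singleton _⟩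

lemma dirPath_snoc {root b n : V} {l : List V} (h : IsDirPath E root b l) (he : E b n) :
    IsDirPath E root n (l ++ [n]) := by
  obtain ⟨h0, h1, h2, h3⟩ := h
  obtain ⟨a, t, rfl⟩ := List.exists_cons_of_ne_nil h0
  refine ⟨by simp, by simpa using h1, List.getLast?_concat, ?_⟩
  rw [List.Chain', List.isChain_append]
  refine ⟨h3, by simp, ?_⟩
  intro x hx y hy
  simp only [List.head?_cons, Option.mem_def, Option.some.injEq] at hy
  rw [h2] at hx
  simp only [Option.mem_def, Option.some.injEq] at hx
  subst hx; subst hy; exact he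

lemma dirPath_len2 {root b : V} {l : List V} (h : IsDirPath E root b l) (hne : b ≠ root) :
    2 ≤ l.length := by
  obtain ⟨h0, h1, h2, h3⟩ := h
  match l with
  | [] => exact absurd rfl h0
  | [a] =>
    simp at h1 h2
    exact absurd (h2.symm.trans h1) hne
  | a :: c :: t => simp

lemma dirPath_decomp {root b : V} {l : List V} (h : IsDirPath E root b l)
    (hlen : 2 ≤ l.length) : ∃ c l', IsDirPath E root c l' ∧ E c b := by
  obtain ⟨h0, h1, h2, h3⟩ := h
  have hd : l.dropLast ++ [l.getLast h0] = l := List.dropLast_append_getLast h0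
  have hb : l.getLast h0 = b := by
    rw [List.getLast?_eq_getLast h0] at h2
    exact Option.some_injective _ h2
  have hdne : l.dropLast ≠ [] := by
    have : l.dropLast.length = l.length - 1 := List.length_dropLast
    intro hc; rw [hc] at this; simp at this; omega
  have hch : l.dropLast.Chain' E ∧ ∀ x ∈ l.dropLast.getLast?, ∀ y ∈ ([l.getLast h0] : List V).head?, E x y := by
    have := h3
    rw [← hd, List.Chain', List.isChain_append] at this
    exact ⟨this.1, this.2.2⟩
  refine ⟨l.dropLast.getLast hdne, l.dropLast, ⟨hdne, ?_, List.getLast?_eq_getLast hdne, hch.1⟩, ?_⟩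
  · rw [← hd] at h1
    obtain ⟨a, t, he⟩ := List.exists_cons_of_ne_nil hdne
    rw [he] at h1 ⊢
    simpa using h1
  · have := hch.2 (l.dropLast.getLast hdne) (by rw [List.getLast?_eq_getLast hdne]; rfl)
      (l.getLast h0) (by rfl)
    rwa [hb] at this

lemma reach_aux (huniq : ∀ a b c : V, E a c → E b c → a = b)
    (root : V) (hroot : ∀ b, ¬ E b root) {u v : V}
    (w : (SimpleGraph.fromRel E).Walk u v) (hv : v = root) :
    ∃ l, IsDirPath E root u l := by
  induction w with
  | nil => rw [← hv]; exact ⟨[_], dirPath_singleton E _⟩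
  | @cons a x c ha p ih =>
    obtain ⟨l, hl⟩ := ih hv
    rw [SimpleGraph.fromRel_adj] at ha
    rcases ha.2 with hE | hE
    · by_cases hx : x = root
      · subst hx; exact absurd hE (hroot a)
      · obtain ⟨d, l', hl', hd⟩ := dirPath_decomp hl (dirPath_len2 hl hx)
        have : d = a := huniq d a x hd hE
        exact ⟨l', this ▸ hl'⟩
    · exact ⟨l ++ [a], dirPath_snoc hl hE⟩

lemma reach (huniq : ∀ a b c : V, E a c → E b c → a = b)
    (hconn : (SimpleGraph.fromRel E).Connected)
    (root : V) (hroot : ∀ b, ¬ E b root) (n : V) : ∃ l, IsDirPath E root n l := by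
  obtain ⟨w⟩ := hconn.preconnected n root
  exact reach_aux huniq root hroot w rfl

lemma depth_root (E : V → V → Prop) (root : V) : depth E root root = 0 :=
  Nat.sInf_eq_zero.mpr (Or.inl ⟨[root], dirPath_singleton E root, rfl⟩)

lemma depth_eq_zero {root n : V} (hr : ∃ l, IsDirPath E root n l)
    (h : depth E root n = 0) : root = n := by
  obtain ⟨l, hl⟩ := hr
  have h1 : 1 ≤ l.length := by
    rcases l with _ | ⟨a, t⟩
    · exact absurd rfl hl.1
    · simp
  have hne : {k | ∃ l : List V, IsDirPath E root n l ∧ l.length = k + 1}.Nonempty :=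
    ⟨l.length - 1, l, hl, by omega⟩
  have hmem := Nat.sInf_mem hne
  rw [show sInf {k | ∃ l : List V, IsDirPath E root n l ∧ l.length = k + 1} = depth E root n from rfl, h] at hmem
  obtain ⟨l', hl', hlen⟩ := hmem
  obtain ⟨a, rfl⟩ := List.length_eq_one_iff.mp hlen
  obtain ⟨_, ha1, ha2, _⟩ := hl'
  simp at ha1 ha2
  rw [← ha1, ha2]

lemma onPath_self {root n : V} (hr : ∃ l, IsDirPath E root n l) : OnPath E root n n := by
  obtain ⟨l, hl⟩ := hr
  refine ⟨l, hl, ?_⟩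
  have := hl.2.2.1
  rw [List.getLast?_eq_getLast hl.1] at this
  exact (Option.some_injective _ this) ▸ List.getLast_mem hl.1

lemma dirPath_root_root {root : V} (hroot : ∀ b, ¬ E b root) {l : List V}
    (h : IsDirPath E root root l) : l = [root] := by
  by_cases hlen : 2 ≤ l.length
  · obtain ⟨c, l', _, hc⟩ := dirPath_decomp h hlen
    exact absurd hc (hroot c)
  · have h1 : 1 ≤ l.length := by
      rcases l with _ | ⟨a, t⟩
      · exact absurd rfl h.1
      · simp
    obtain ⟨a, rfl⟩ := List.length_eq_one_iff.mp (show l.length = 1 by omega)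
    have := h.2.1
    simp at this
    rw [this]

lemma vEntry_self_eq_zero_iff {V : Type*} [Fintype V] {E : V → V → Prop}
    (h : IsTransTree E) (root : V) (hroot : ∀ b, ¬ E b root) (s : V) :
    vEntry E root s s = 0 ↔ root = s := by
  obtain ⟨huniq, _, hconn⟩ := h
  have hr : ∃ l, IsDirPath E root s l := reach huniq hconn root hroot s
  constructor
  · intro h0
    have hmem : depth E root s ∈
        {k | ∃ m : V, OnPath E root s m ∧ OnPath E root s m ∧ depth E root m = k} :=
      ⟨s, onPath_self hr, onPath_self hr, rfl⟩
    have hbdd : BddAbove {k | ∃ m : V, OnPath E root s m ∧ OnPath E root s m ∧ depth E root m = k} := by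
      apply (Set.finite_range (depth E root)).bddAbove.mono
      rintro k ⟨m, _, _, hm⟩
      exact ⟨m, hm⟩
    have := le_csSup hbdd hmem
    rw [show sSup {k | ∃ m : V, OnPath E root s m ∧ OnPath E root s m ∧ depth E root m = k} = vEntry E root s s from rfl, h0] at this
    exact depth_eq_zero hr (Nat.le_zero.mp this)
  · rintro rfl
    have : ∀ k ∈ {k | ∃ m : V, OnPath E root root m ∧ OnPath E root root m ∧ depth E root m = k}, k ≤ 0 := by
      rintro k ⟨m, ⟨l, hl, hm⟩, _, rfl⟩
      rw [dirPath_root_root hroot hl] at hm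
      simp at hm
      rw [hm, depth_root]
    exact Nat.le_zero.mp (csSup_le' this)

end Aux


/-- In a transmission tree `T = (S ⊕ U, E)`, the source case is sampled
iff there is a sampled case `s` with `v_{s,s}(T) = 0`. Consequently, if two transmission
trees with the same sampled set `S` satisfy `v|_S(T1) = v|_S(T2)`, then the source of
`T1` is unsampled iff the source of `T2` is unsampled, and if both sources are sampled
then they are the same sampled case. -/
theorem stmt10 {S U1 U2 : Type*} [Fintype S] [Fintype U1] [Fintype U2]
    (E1 : S ⊕ U1 → S ⊕ U1 → Prop) (E2 : S ⊕ U2 → S ⊕ U2 → Prop)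
    (h1 : IsTransTree E1) (h2 : IsTransTree E2)
    (root1 : S ⊕ U1) (hroot1 : ∀ b, ¬ E1 b root1)
    (root2 : S ⊕ U2) (hroot2 : ∀ b, ¬ E2 b root2) :
    ((∃ s : S, root1 = Sum.inl s) ↔
      (∃ s : S, vEntry E1 root1 (Sum.inl s) (Sum.inl s) = 0)) ∧
    ((∀ s t : S, vEntry E1 root1 (Sum.inl s) (Sum.inl t)
        = vEntry E2 root2 (Sum.inl s) (Sum.inl t)) →
      (((∀ s : S, root1 ≠ Sum.inl s) ↔ (∀ s : S, root2 ≠ Sum.inl s)) ∧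
        (∀ s1 s2 : S, root1 = Sum.inl s1 → root2 = Sum.inl s2 → s1 = s2))) := by
  have key1 : ∀ s : S, vEntry E1 root1 (Sum.inl s) (Sum.inl s) = 0 ↔ root1 = Sum.inl s :=
    fun s => vEntry_self_eq_zero_iff h1 root1 hroot1 (Sum.inl s)
  have key2 : ∀ s : S, vEntry E2 root2 (Sum.inl s) (Sum.inl s) = 0 ↔ root2 = Sum.inl s :=
    fun s => vEntry_self_eq_zero_iff h2 root2 hroot2 (Sum.inl s)
  refine ⟨⟨fun ⟨s, hs⟩ => ⟨s, (key1 s).mpr hs⟩, fun ⟨s, hs⟩ => ⟨s, (key1 s).mp hs⟩⟩, ?_⟩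
  intro hv
  have hiff : (∃ s : S, root1 = Sum.inl s) ↔ (∃ s : S, root2 = Sum.inl s) := by
    constructor
    · rintro ⟨s, hs⟩
      exact ⟨s, (key2 s).mp (by rw [← hv s s]; exact (key1 s).mpr hs)⟩
    · rintro ⟨s, hs⟩
      exact ⟨s, (key1 s).mp (by rw [hv s s]; exact (key2 s).mpr hs)⟩
  constructor
  · simp only [← not_exists] at *
    exact not_congr hiff
  · rintro s1 s2 rfl h2'
    have : root2 = Sum.inl s1 := (key2 s1).mp (by rw [← hv s1 s1]; exact (key1 s1).mpr rfl)
    rw [this] at h2'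
    exact (Sum.inl.injEq _ _ ▸ h2' : s1 = s2)
end

section
/- Let T=(S ∪ U, E) be a transmission tree, let i ∈ S be a sampled node of depth δ, and let x be an integer with 0 ≤ x ≤ δ. Then the (unique) node at depth x on the path p_i from the source to i is a sampled node a ∈ S if and only if v_{a,a}(T) = x and v_{a,i}(T) = x; and the node at depth x on p_i is unsampled if and only if there is no b ∈ S with v_{b,b}(T) = x and v_{b,i}(T) = x. -/
section Helpers

variable {V : Type*} {E : V → V → Prop} {root : V}

/-- Reversed-path predicate: `r` is the reverse of a directed path from `root` to `n`. -/
def RPath (E : V → V → Prop) (root n : V) (r : List V) : Prop :=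
  r.head? = some n ∧ r.getLast? = some root ∧ r.Chain' (flip E)

lemma rpath_ne_nil {n : V} {r : List V} (h : RPath E root n r) : r ≠ [] := by
  intro h0; rw [h0] at h; simp [RPath] at h

lemma isDirPath_iff_rpath {n : V} {l : List V} :
    IsDirPath E root n l ↔ RPath E root n l.reverse := by
  unfold IsDirPath RPath
  rw [List.head?_reverse, List.getLast?_reverse]
  constructor
  · rintro ⟨h0, h1, h2, h3⟩
    refine ⟨h2, h1, ?_⟩
    exact List.isChain_reverse.2 h3
  · rintro ⟨h2, h1, h3⟩
    refine ⟨?_, h1, h2, ?_⟩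
    · intro h0; rw [h0] at h1; simp at h1
    · exact List.isChain_reverse.1 h3

lemma rtg_of_chain' {r : V → V → Prop} :
    ∀ (l : List V) (a b : V), l.Chain' r → l.head? = some a → l.getLast? = some b →
      Relation.ReflTransGen r a b := by
  intro l
  induction l with
  | nil => intro a b _ ha _; simp at ha
  | cons x t ih =>
    intro a b hc ha hb
    cases t with
    | nil =>
      simp at ha hb; subst ha; subst hb; exact .refl
    | cons y t' =>
      have ha' : x = a := by simpa using ha
      subst ha'
      have h1 : r x y := (List.isChain_cons_cons.1 hc).1
      have h2 := ih y b (List.isChain_cons_cons.1 hc).2 rfl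
        (by rw [← hb, List.getLast?_cons_cons])
      exact Relation.ReflTransGen.head h1 h2

lemma tg_of_chain' {r : V → V → Prop} {x y b : V} {t : List V}
    (hc : (x :: y :: t).Chain' r) (hb : (x :: y :: t).getLast? = some b) :
    Relation.TransGen r x b :=
  Relation.TransGen.head' (List.isChain_cons_cons.1 hc).1
    (rtg_of_chain' (y :: t) y b (List.isChain_cons_cons.1 hc).2 rfl
      (by rw [← hb, List.getLast?_cons_cons]))

lemma rpath_unique (uniq : ∀ a b c : V, E a c → E b c → a = b)
    (acyc : ∀ v : V, ¬ Relation.TransGen E v v) :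
    ∀ (r₁ : List V) (n : V) (r₂ : List V),
      RPath E root n r₁ → RPath E root n r₂ → r₁ = r₂ := by
  intro r₁
  induction r₁ with
  | nil => intro n r₂ h _; exact absurd rfl (rpath_ne_nil h)
  | cons x t ih =>
    intro n r₂ h₁ h₂
    obtain ⟨hh₁, hl₁, hc₁⟩ := h₁
    obtain ⟨hh₂, hl₂, hc₂⟩ := h₂
    have hx : n = x := (show x = n by simpa using hh₁).symm
    subst hx
    obtain ⟨y, s, rfl⟩ : ∃ y s, r₂ = y :: s := by
      cases r₂ with
      | nil => simp at hh₂
      | cons y s => exact ⟨y, s, rfl⟩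
    have hy : n = y := (show y = n by simpa using hh₂).symm
    subst hy
    cases t with
    | nil =>
      have hxr : n = root := by simpa using hl₁
      cases s with
      | nil => rfl
      | cons z s' =>
        have htg : Relation.TransGen (flip E) n root := tg_of_chain' hc₂ hl₂
        rw [hxr] at htg
        exact absurd (Relation.transGen_swap.1 htg) (acyc _)
    | cons z t' =>
      cases s with
      | nil =>
        have hxr : n = root := by simpa using hl₂
        have htg : Relation.TransGen (flip E) n root := tg_of_chain' hc₁ hl₁
        rw [hxr] at htg
        exact absurd (Relation.transGen_swap.1 htg) (acyc _)
      | cons w s' =>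
        have hz : flip E n z := (List.isChain_cons_cons.1 hc₁).1
        have hw : flip E n w := (List.isChain_cons_cons.1 hc₂).1
        have hzw : z = w := uniq z w n hz hw
        rw [← hzw] at hl₂ hc₂
        have heq := ih z (z :: s')
          ⟨rfl, by rw [← hl₁, List.getLast?_cons_cons], (List.isChain_cons_cons.1 hc₁).2⟩
          ⟨rfl, by rw [← hl₂, List.getLast?_cons_cons], (List.isChain_cons_cons.1 hc₂).2⟩
        rw [← hzw, heq]

lemma exists_rpath (uniq : ∀ a b c : V, E a c → E b c → a = b)
    (hroot : ∀ b : V, ¬ E b root)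
    (conn : (SimpleGraph.fromRel E).Connected) (n : V) :
    ∃ r, RPath E root n r := by
  have base : ∃ r, RPath E root root r := ⟨[root], rfl, rfl, List.isChain_singleton _⟩
  obtain ⟨w⟩ := conn.preconnected root n
  suffices h : ∀ a b : V, (SimpleGraph.fromRel E).Walk a b →
      (∃ r, RPath E root a r) → ∃ r, RPath E root b r from h root n w base
  intro a b w
  induction w with
  | nil => exact id
  | @cons c d e hadj w ih =>
    intro ha
    apply ih
    obtain ⟨hne, hE⟩ := (SimpleGraph.fromRel_adj E c d).1 hadj
    obtain ⟨r, hr⟩ := ha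
    obtain ⟨hh, hl, hc⟩ := hr
    obtain ⟨y, t, rfl⟩ : ∃ y t, r = y :: t := by
      cases r with
      | nil => simp at hh
      | cons y t => exact ⟨y, t, rfl⟩
    have hy : c = y := (show y = c by simpa using hh).symm
    subst hy
    rcases hE with hE | hE
    · refine ⟨d :: c :: t, rfl, by rw [List.getLast?_cons_cons]; exact hl, ?_⟩
      exact List.isChain_cons_cons.2 ⟨hE, hc⟩
    · -- hE : E d c, so d is the infector of c
      cases t with
      | nil =>
        have hyr : c = root := by simpa using hl
        subst hyr
        exact absurd hE (hroot d)
      | cons z t' =>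
        have hz : flip E c z := (List.isChain_cons_cons.1 hc).1
        have hzd : d = z := (uniq z d c hz hE).symm
        subst hzd
        exact ⟨d :: t', rfl, by rw [← hl, List.getLast?_cons_cons],
          (List.isChain_cons_cons.1 hc).2⟩

lemma depth_rpath (uniq : ∀ a b c : V, E a c → E b c → a = b)
    (acyc : ∀ v : V, ¬ Relation.TransGen E v v)
    {n : V} {r : List V} (h : RPath E root n r) : depth E root n = r.length - 1 := by
  have hset : {k | ∃ l : List V, IsDirPath E root n l ∧ l.length = k + 1}
      = {r.length - 1} := by
    ext k
    simp only [Set.mem_setOf_eq, Set.mem_singleton_iff]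
    constructor
    · rintro ⟨l, hl, hlen⟩
      have heq := rpath_unique uniq acyc l.reverse n r (isDirPath_iff_rpath.1 hl) h
      have : l.reverse.length = r.length := by rw [heq]
      rw [List.length_reverse] at this
      omega
    · rintro rfl
      have hr1 : 1 ≤ r.length := List.length_pos_iff.2 (rpath_ne_nil h)
      refine ⟨r.reverse, isDirPath_iff_rpath.2 (by simpa using h), ?_⟩
      rw [List.length_reverse]; omega
  rw [depth, hset, csInf_singleton]

lemma rpath_drop {n : V} {r : List V} (h : RPath E root n r) (k : ℕ)
    (hk : k < r.length) : RPath E root (r[k]'hk) (r.drop k) := by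
  refine ⟨?_, ?_, h.2.2.suffix (List.drop_suffix k r)⟩
  · rw [List.head?_drop]; exact List.getElem?_eq_getElem hk
  · obtain ⟨s, hs⟩ := List.drop_suffix k r
    have hne : r.drop k ≠ [] := by
      intro h0; rw [List.drop_eq_nil_iff] at h0; omega
    have hgl := List.getLast?_append_of_ne_nil s hne
    rw [hs] at hgl
    rw [← hgl, h.2.1]

lemma depth_getElem (uniq : ∀ a b c : V, E a c → E b c → a = b)
    (acyc : ∀ v : V, ¬ Relation.TransGen E v v)
    {n : V} {r : List V} (h : RPath E root n r) {k : ℕ} (hk : k < r.length) :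
    depth E root (r[k]'hk) = r.length - 1 - k := by
  have := depth_rpath uniq acyc (rpath_drop h k hk)
  rw [List.length_drop] at this
  omega

lemma mem_suffix_rpath {n m : V} {r : List V} (h : RPath E root n r) (hm : m ∈ r) :
    ∃ t, RPath E root m (m :: t) ∧ (m :: t) <:+ r := by
  obtain ⟨s, t, rfl⟩ := List.append_of_mem hm
  refine ⟨t, ⟨rfl, ?_, h.2.2.suffix ⟨s, rfl⟩⟩, ⟨s, rfl⟩⟩
  rw [← h.2.1, List.getLast?_append_of_ne_nil s (by simp)]

lemma depth_le_of_mem (uniq : ∀ a b c : V, E a c → E b c → a = b)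
    (acyc : ∀ v : V, ¬ Relation.TransGen E v v)
    {i m : V} {r : List V} (h : RPath E root i r) (hm : m ∈ r) :
    depth E root m ≤ depth E root i := by
  obtain ⟨t, hp, hsuf⟩ := mem_suffix_rpath h hm
  have h1 := depth_rpath uniq acyc hp
  have h2 := depth_rpath uniq acyc h
  have h3 : t.length + 1 ≤ r.length := by simpa using hsuf.length_le
  simp at h1
  omega

lemma eq_of_mem_of_depth (uniq : ∀ a b c : V, E a c → E b c → a = b)
    (acyc : ∀ v : V, ¬ Relation.TransGen E v v)
    {i m m' : V} {r : List V} (h : RPath E root i r) (hm : m ∈ r) (hm' : m' ∈ r)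
    (hd : depth E root m = depth E root m') : m = m' := by
  obtain ⟨t, hp, s, hs⟩ := mem_suffix_rpath h hm
  obtain ⟨t', hp', s', hs'⟩ := mem_suffix_rpath h hm'
  have h1 := depth_rpath uniq acyc hp
  have h2 := depth_rpath uniq acyc hp'
  simp at h1 h2
  have hlen : s.length = s'.length := by
    have e1 := congrArg List.length hs
    have e2 := congrArg List.length hs'
    simp at e1 e2
    omega
  have e1 : r.drop s.length = m :: t := by rw [← hs, List.drop_left]
  have e2 : r.drop s'.length = m' :: t' := by rw [← hs', List.drop_left]
  rw [hlen, e2] at e1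
  exact ((List.cons_eq_cons.1 e1).1).symm

lemma onPath_iff (uniq : ∀ a b c : V, E a c → E b c → a = b)
    (acyc : ∀ v : V, ¬ Relation.TransGen E v v)
    {i m : V} {r : List V} (h : RPath E root i r) : OnPath E root i m ↔ m ∈ r := by
  constructor
  · rintro ⟨l, hl, hm⟩
    have heq := rpath_unique uniq acyc l.reverse i r (isDirPath_iff_rpath.1 hl) h
    rw [← heq]; simpa using hm
  · intro hm
    exact ⟨r.reverse, isDirPath_iff_rpath.2 (by simpa using h), by simpa using hm⟩

lemma self_mem_rpath {n : V} {r : List V} (h : RPath E root n r) : n ∈ r :=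
  List.mem_of_mem_head? (by rw [h.1]; rfl)

lemma root_mem_rpath {n : V} {r : List V} (h : RPath E root n r) : root ∈ r :=
  List.mem_of_mem_getLast? (by rw [h.2.1]; rfl)

lemma vEntry_eq_depth (uniq : ∀ a b c : V, E a c → E b c → a = b)
    (acyc : ∀ v : V, ¬ Relation.TransGen E v v)
    {a j : V} {ra : List V} (ha : RPath E root a ra) (hOn : OnPath E root j a) :
    vEntry E root a j = depth E root a := by
  have hmem : depth E root a ∈
      {k | ∃ m : V, OnPath E root a m ∧ OnPath E root j m ∧ depth E root m = k} :=
    ⟨a, (onPath_iff uniq acyc ha).2 (self_mem_rpath ha), hOn, rfl⟩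
  have hub : ∀ k ∈ {k | ∃ m : V, OnPath E root a m ∧ OnPath E root j m ∧
      depth E root m = k}, k ≤ depth E root a := by
    rintro k ⟨m, hm1, _, rfl⟩
    exact depth_le_of_mem uniq acyc ha ((onPath_iff uniq acyc ha).1 hm1)
  exact le_antisymm (csSup_le ⟨_, hmem⟩ hub) (le_csSup ⟨depth E root a, hub⟩ hmem)

lemma vEntry_attained (uniq : ∀ a b c : V, E a c → E b c → a = b)
    (acyc : ∀ v : V, ¬ Relation.TransGen E v v)
    {a j : V} {ra rj : List V} (ha : RPath E root a ra) (hj : RPath E root j rj) :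
    ∃ m, OnPath E root a m ∧ OnPath E root j m ∧
      depth E root m = vEntry E root a j := by
  have hne : Set.Nonempty
      {k | ∃ m : V, OnPath E root a m ∧ OnPath E root j m ∧ depth E root m = k} :=
    ⟨depth E root root, root, (onPath_iff uniq acyc ha).2 (root_mem_rpath ha),
      (onPath_iff uniq acyc hj).2 (root_mem_rpath hj), rfl⟩
  have hbdd : BddAbove
      {k | ∃ m : V, OnPath E root a m ∧ OnPath E root j m ∧ depth E root m = k} := by
    refine ⟨depth E root a, ?_⟩
    rintro k ⟨m, hm1, _, rfl⟩
    exact depth_le_of_mem uniq acyc ha ((onPath_iff uniq acyc ha).1 hm1)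
  exact Nat.sSup_mem hne hbdd

end Helpers

/-- Let `T = (S ∪ U, E)` be a transmission tree, `i` a sampled node of
depth `δ`, and `0 ≤ x ≤ δ`. Then the (unique) node at depth `x` on the path from the
source to `i` is a given sampled node `a` iff `v_{a,a}(T) = x` and `v_{a,i}(T) = x`;
and the node at depth `x` on that path is unsampled iff there is no sampled `b` with
`v_{b,b}(T) = x` and `v_{b,i}(T) = x`. -/
theorem stmt11 {V : Type*} [Fintype V] (E : V → V → Prop) (Samp : Set V)
    (h : IsTransTree E) (root : V) (hroot : ∀ b : V, ¬ E b root)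
    (i : V) (hi : i ∈ Samp) (δ x : ℕ) (hδ : depth E root i = δ) (hx : x ≤ δ) :
    (∀ a : V, a ∈ Samp →
      ((OnPath E root i a ∧ depth E root a = x) ↔
        (vEntry E root a a = x ∧ vEntry E root a i = x))) ∧
    ((∃ n : V, OnPath E root i n ∧ depth E root n = x ∧ n ∉ Samp) ↔
      ¬ ∃ b ∈ Samp, vEntry E root b b = x ∧ vEntry E root b i = x) := by
  obtain ⟨uniq, acyc, conn⟩ := h
  obtain ⟨ri, hri⟩ := exists_rpath uniq hroot conn i
  -- Part 1
  have part1 : ∀ a : V, (OnPath E root i a ∧ depth E root a = x) ↔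
      (vEntry E root a a = x ∧ vEntry E root a i = x) := by
    intro a
    obtain ⟨ra, hra⟩ := exists_rpath uniq hroot conn a
    have hself : OnPath E root a a := (onPath_iff uniq acyc hra).2 (self_mem_rpath hra)
    constructor
    · rintro ⟨hOn, hdep⟩
      rw [vEntry_eq_depth uniq acyc hra hself, vEntry_eq_depth uniq acyc hra hOn]
      exact ⟨hdep, hdep⟩
    · rintro ⟨hvaa, hvai⟩
      rw [vEntry_eq_depth uniq acyc hra hself] at hvaa
      obtain ⟨m, hma, hmi, hmd⟩ := vEntry_attained uniq acyc hra hri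
      rw [hvai] at hmd
      have hmem : m ∈ ra := (onPath_iff uniq acyc hra).1 hma
      have : m = a := eq_of_mem_of_depth uniq acyc hra hmem (self_mem_rpath hra)
        (by rw [hmd, hvaa])
      subst this
      exact ⟨hmi, by rw [hmd]⟩
  -- the node at depth x on p_i
  have hlen : depth E root i = ri.length - 1 := depth_rpath uniq acyc hri
  have hpos : 1 ≤ ri.length := List.length_pos_iff.2 (rpath_ne_nil hri)
  have hk : ri.length - 1 - x < ri.length := by omega
  set n₀ := ri[ri.length - 1 - x]'hk with hn₀
  have hn₀mem : n₀ ∈ ri := List.getElem_mem hk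
  have hn₀on : OnPath E root i n₀ := (onPath_iff uniq acyc hri).2 hn₀mem
  have hn₀dep : depth E root n₀ = x := by
    have := depth_getElem uniq acyc hri hk
    rw [← hn₀] at this
    omega
  have huniq_at : ∀ n : V, OnPath E root i n → depth E root n = x → n = n₀ := by
    intro n hOn hdep
    exact eq_of_mem_of_depth uniq acyc hri ((onPath_iff uniq acyc hri).1 hOn) hn₀mem
      (by rw [hdep, hn₀dep])
  refine ⟨fun a _ => part1 a, ?_, ?_⟩
  · rintro ⟨n, hOn, hdep, hns⟩ ⟨b, hb, hbb, hbi⟩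
    obtain ⟨hbOn, hbdep⟩ := (part1 b).2 ⟨hbb, hbi⟩
    have h1 : n = n₀ := huniq_at n hOn hdep
    have h2 : b = n₀ := huniq_at b hbOn hbdep
    rw [h1] at hns; rw [h2] at hb
    exact hns hb
  · intro hne
    refine ⟨n₀, hn₀on, hn₀dep, fun hs => hne ⟨n₀, hs, (part1 n₀).1 ⟨hn₀on, hn₀dep⟩⟩⟩
end
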